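/- For every z ∈ ℂ∖[−1,1], (1/π) ∫_{−1}^{1} log|t−z| · t/√(1−t²) dt = −Re( J₊⁻¹(z) ). -/

import Mathlib

open MeasureTheory Filter Set

open scoped Real

/-- The inverse Joukowsky transform mapping the slit plane to the unit disk,
`J₊⁻¹(z) = z - (z-1)^{1/2} (z+1)^{1/2}` with principal-branch square roots. -/
noncomputable def Jinv (z : ℂ) : ℂ :=
  z - (z - 1) ^ ((1 : ℂ) / 2) * (z + 1) ^ ((1 : ℂ) / 2)

lemma int_cos_k {k : ℝ} (hk : k ≠ 0) :
    ∫ x in (0:ℝ)..π, Real.cos (k*x) = Real.sin (k*π) / k := by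
  have := intervalIntegral.integral_comp_mul_left (a := (0:ℝ)) (b := π) (fun x => Real.cos x) hk
  rw [this]
  simp [integral_cos, div_eq_inv_mul]

lemma int_cos_nat (n : ℕ) (hn : n ≠ 0) : ∫ x in (0:ℝ)..π, Real.cos (n*x) = 0 := by
  rw [int_cos_k (by exact_mod_cast hn)]
  simp [Real.sin_nat_mul_pi]

lemma orth (n : ℕ) : ∫ x in (0:ℝ)..π, Real.cos (n*x) * Real.cos x
    = if n = 1 then π/2 else 0 := by
  have key : ∀ x : ℝ, Real.cos (n*x) * Real.cos x
      = (Real.cos ((n+1)*x) + Real.cos (((n:ℝ)-1)*x))/2 := by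
    intro x
    have h1 := Real.cos_add (n*x) x
    have h2 := Real.cos_sub (n*x) x
    have e1 : ((n:ℝ)+1)*x = n*x + x := by ring
    have e2 : ((n:ℝ)-1)*x = n*x - x := by ring
    rw [e1, e2, h1, h2]; ring
  rw [intervalIntegral.integral_congr (g := fun x => (Real.cos ((n+1)*x) + Real.cos (((n:ℝ)-1)*x))/2)
    (fun x _ => key x)]
  have hi1 : IntervalIntegrable (fun x => Real.cos (((n:ℝ)+1)*x)) volume 0 π := by
    apply Continuous.intervalIntegrable; fun_prop
  have hi2 : IntervalIntegrable (fun x => Real.cos (((n:ℝ)-1)*x)) volume 0 π := by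
    apply Continuous.intervalIntegrable; fun_prop
  rw [intervalIntegral.integral_div, intervalIntegral.integral_add hi1 hi2]
  have e1 : ∫ x in (0:ℝ)..π, Real.cos (((n:ℝ)+1)*x) = 0 := by
    have : ((n:ℝ)+1) = ((n+1 : ℕ) : ℝ) := by push_cast; ring
    rw [this]; exact int_cos_nat (n+1) (by omega)
  rcases eq_or_ne n 1 with rfl | hn1
  · norm_num [e1]
  · have e2 : ∫ x in (0:ℝ)..π, Real.cos (((n:ℝ)-1)*x) = 0 := by
      rcases eq_or_ne n 0 with rfl | hn0
      · simp only [Nat.cast_zero, zero_sub, neg_one_mul, Real.cos_neg]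
        simp [integral_cos]
      · have : ((n:ℝ)-1) = ((n-1 : ℕ) : ℝ) := by
          have h1 : 1 ≤ n := Nat.one_le_iff_ne_zero.mpr hn0
          push_cast [h1]; ring
        rw [this]; exact int_cos_nat (n-1) (by omega)
    simp [e1, e2, hn1]

lemma hasSum_key {w : ℂ} (hw : ‖w‖ < 1) (θ : ℝ) :
    HasSum (fun n : ℕ => -(2 * (w ^ n).re / n * Real.cos (n * θ) * Real.cos θ))
      (Real.log (‖1 - 2 * w * Real.cos θ + w ^ 2‖) * Real.cos θ) := by
  set u₁ := w * Complex.exp ((θ:ℂ) * Complex.I) with hu₁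
  set u₂ := w * Complex.exp (((-θ:ℝ):ℂ) * Complex.I) with hu₂
  have habs₁ : ‖u₁‖ < 1 := by
    rw [hu₁, norm_mul, Complex.norm_exp_ofReal_mul_I]
    simpa using hw
  have habs₂ : ‖u₂‖ < 1 := by
    rw [hu₂, norm_mul, Complex.norm_exp_ofReal_mul_I]
    simpa using hw
  have hne₁ : 1 - u₁ ≠ 0 := by
    intro h
    have : (1:ℂ) = u₁ := by linear_combination h
    rw [← this] at habs₁; simp at habs₁
  have hne₂ : 1 - u₂ ≠ 0 := by
    intro h
    have : (1:ℂ) = u₂ := by linear_combination h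
    rw [← this] at habs₂; simp at habs₂
  have hsum : ∀ n : ℕ, u₁^n + u₂^n = (w^n) * ((2*Real.cos (n*θ) : ℝ) : ℂ) := by
    intro n
    rw [hu₁, hu₂, mul_pow, mul_pow, ← Complex.exp_nat_mul, ← Complex.exp_nat_mul]
    have e1 : (n:ℂ) * ((θ:ℂ) * Complex.I) = ((n*θ:ℝ):ℂ) * Complex.I := by push_cast; ring
    have e2 : (n:ℂ) * (((-θ:ℝ):ℂ) * Complex.I) = ((-(n*θ):ℝ):ℂ) * Complex.I := by
      push_cast; ring
    rw [e1, e2, Complex.exp_mul_I, Complex.exp_mul_I]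
    push_cast
    rw [Complex.cos_neg, Complex.sin_neg]
    ring
  have hu : u₁ * u₂ = w^2 := by
    rw [hu₁, hu₂, mul_mul_mul_comm, ← Complex.exp_add]
    have : (θ:ℂ) * Complex.I + ((-θ:ℝ):ℂ) * Complex.I = 0 := by push_cast; ring
    rw [this, Complex.exp_zero]; ring
  have hP : (1 - u₁) * (1 - u₂) = 1 - 2*w*(Real.cos θ : ℂ) + w^2 := by
    have h1 : u₁ + u₂ = 2*w*(Real.cos θ : ℂ) := by
      have h := hsum 1
      simp only [pow_one, Nat.cast_one, one_mul] at h
      push_cast at h ⊢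
      linear_combination h
    linear_combination hu - h1
  have H1 := Complex.hasSum_taylorSeries_neg_log habs₁
  have H2 := Complex.hasSum_taylorSeries_neg_log habs₂
  have Hsum := (H1.add H2).neg
  have hval : -(-Complex.log (1 - u₁) + -Complex.log (1 - u₂))
      = Complex.log (1 - u₁) + Complex.log (1 - u₂) := by ring
  rw [hval] at Hsum
  have Hmul := (Hsum.mapL Complex.reCLM).mul_right (Real.cos θ)
  convert Hmul using 1
  · rfl
  · funext n
    have h1 : -(u₁ ^ n / (n:ℂ) + u₂ ^ n / (n:ℂ)) = -(w^n * ((2*Real.cos (n*θ)/n : ℝ):ℂ)) := by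
      rw [← add_div, hsum n, Complex.ofReal_div]
      push_cast
      ring
    rw [Complex.reCLM_apply, h1, Complex.neg_re]
    simp only [Complex.mul_re, Complex.ofReal_re, Complex.ofReal_im, mul_zero, sub_zero]
    ring
  · rw [Complex.reCLM_apply, Complex.add_re, Complex.log_re, Complex.log_re,
      ← Real.log_mul (norm_ne_zero_iff.mpr hne₁) (norm_ne_zero_iff.mpr hne₂), ← norm_mul, hP]

lemma integral_core {w : ℂ} (hw : ‖w‖ < 1) :
    ∫ θ in Ioo (0:ℝ) π, Real.log (‖1 - 2*w*Real.cos θ + w^2‖) * Real.cos θ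
      = -(π * w.re) := by
  set F : ℕ → ℝ → ℝ := fun n θ => -(2 * (w ^ n).re / n * Real.cos (n * θ) * Real.cos θ) with hF
  have hcont : ∀ n, Continuous (F n) := by intro n; rw [hF]; fun_prop
  have hint : ∀ n, IntegrableOn (F n) (Ioo (0:ℝ) π) := fun n =>
    ((hcont n).integrableOn_Icc).mono_set Ioo_subset_Icc_self
  have hb : ∀ (n : ℕ) (θ : ℝ), ‖F n θ‖ ≤ 2 * ‖w‖ ^ n := by
    intro n θ
    rcases Nat.eq_zero_or_pos n with rfl | hn
    · simp [hF]
    · have h1 : |(w^n).re| ≤ ‖w‖ ^ n := by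
        calc |(w^n).re| ≤ ‖w^n‖ := Complex.abs_re_le_norm _
        _ = ‖w‖ ^ n := norm_pow _ _
      have h2 : |Real.cos (n*θ)| ≤ 1 := Real.abs_cos_le_one _
      have h3 : |Real.cos θ| ≤ 1 := Real.abs_cos_le_one _
      have hn1 : (1:ℝ) ≤ (n:ℝ) := by exact_mod_cast hn
      have s1 : |2*(w^n).re/(n:ℝ)| ≤ 2 * ‖w‖ ^ n := by
        rw [abs_div, abs_mul, abs_two, abs_of_nonneg (by positivity : (0:ℝ) ≤ (n:ℝ))]
        calc 2*|(w^n).re|/(n:ℝ) ≤ 2*(‖w‖^n)/(n:ℝ) := by gcongr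
        _ ≤ 2*(‖w‖^n)/1 := by gcongr
        _ = 2 * ‖w‖ ^ n := by rw [div_one]
      rw [hF]
      simp only [Real.norm_eq_abs, abs_neg]
      calc |2*(w^n).re/(n:ℝ) * Real.cos (n*θ) * Real.cos θ|
          = |2*(w^n).re/(n:ℝ)| * |Real.cos (n*θ)| * |Real.cos θ| := by
            rw [abs_mul, abs_mul]
      _ ≤ |2*(w^n).re/(n:ℝ)| * 1 * 1 := by gcongr
      _ = |2*(w^n).re/(n:ℝ)| := by ring
      _ ≤ 2 * ‖w‖ ^ n := s1
  have hvol : (volume (Ioo (0:ℝ) π)).toReal = π := by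
    rw [Real.volume_Ioo, ENNReal.toReal_ofReal (by simpa using Real.pi_pos.le)]
    ring
  have hsummable : Summable (fun n => ∫ θ in Ioo (0:ℝ) π, ‖F n θ‖) := by
    apply Summable.of_nonneg_of_le
      (fun n => integral_nonneg (fun θ => norm_nonneg _))
      (fun n => ?_) (((summable_geometric_of_lt_one (norm_nonneg w) hw)).mul_left (2*π))
    calc ∫ θ in Ioo (0:ℝ) π, ‖F n θ‖ ≤ ∫ θ in Ioo (0:ℝ) π, 2 * ‖w‖ ^ n := by
          apply setIntegral_mono_on (hint n).norm (integrableOn_const ?_)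
            measurableSet_Ioo (fun θ _ => hb n θ)
          rw [Real.volume_Ioo]; exact ENNReal.ofReal_ne_top
    _ = 2 * π * ‖w‖ ^ n := by
        rw [setIntegral_const, smul_eq_mul, measureReal_def, hvol]; ring
  have hswap := integral_tsum_of_summable_integral_norm (fun n => hint n) hsummable
  have hptw : ∀ θ : ℝ, ∑' n, F n θ
      = Real.log (‖1 - 2*w*Real.cos θ + w^2‖) * Real.cos θ :=
    fun θ => (hasSum_key hw θ).tsum_eq
  simp only [hptw] at hswap
  rw [← hswap]
  have hione : ∀ n : ℕ, ∫ θ in Ioo (0:ℝ) π, F n θ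
      = -(2*(w^n).re/n) * ∫ θ in Ioo (0:ℝ) π, Real.cos (n*θ) * Real.cos θ := by
    intro n
    rw [← integral_const_mul]
    congr 1; funext θ; rw [hF]; ring
  have hioi : ∀ n : ℕ, ∫ θ in Ioo (0:ℝ) π, Real.cos (n*θ) * Real.cos θ
      = if n = 1 then π/2 else 0 := by
    intro n
    rw [← integral_Ioc_eq_integral_Ioo, ← intervalIntegral.integral_of_le Real.pi_pos.le]
    exact orth n
  rw [tsum_eq_single 1 ?_]
  · rw [hione 1, hioi 1]
    norm_num
    ring
  · intro n hn
    rw [hione n, hioi n, if_neg hn, mul_zero]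

lemma hz_ne {z : ℂ} (hz : z ∉ Complex.ofReal '' Set.Icc (-1 : ℝ) 1)
    (t : ℝ) (ht : t ∈ Icc (-1:ℝ) 1) : (t:ℂ) ≠ z := fun h => hz ⟨t, ht, h⟩

lemma h1_ne {z : ℂ} (hz : z ∉ Complex.ofReal '' Set.Icc (-1 : ℝ) 1) : z - 1 ≠ 0 := by
  intro h
  exact hz_ne hz 1 (by norm_num) (by push_cast; linear_combination -h)

lemma hm1_ne {z : ℂ} (hz : z ∉ Complex.ofReal '' Set.Icc (-1 : ℝ) 1) : z + 1 ≠ 0 := by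
  intro h
  exact hz_ne hz (-1) (by norm_num) (by push_cast; linear_combination -h)

lemma half_pow {u : ℂ} (hu : u ≠ 0) : (u ^ ((1:ℂ)/2))^2 = u := by
  rw [Complex.cpow_def_of_ne_zero hu, sq, ← Complex.exp_add]
  rw [show Complex.log u * (1/2) + Complex.log u * (1/2) = Complex.log u by ring]
  exact Complex.exp_log hu

lemma s_sq {z : ℂ} (hz : z ∉ Complex.ofReal '' Set.Icc (-1 : ℝ) 1) :
    ((z - 1) ^ ((1 : ℂ) / 2) * (z + 1) ^ ((1 : ℂ) / 2))^2 = (z-1)*(z+1) := by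
  rw [mul_pow, half_pow (h1_ne hz), half_pow (hm1_ne hz)]

lemma Jinv_mul {z : ℂ} (hz : z ∉ Complex.ofReal '' Set.Icc (-1 : ℝ) 1) :
    Jinv z * (z + (z - 1) ^ ((1 : ℂ) / 2) * (z + 1) ^ ((1 : ℂ) / 2)) = 1 := by
  rw [Jinv]
  linear_combination -(s_sq hz)

lemma Jinv_ne_zero {z : ℂ} (hz : z ∉ Complex.ofReal '' Set.Icc (-1 : ℝ) 1) :
    Jinv z ≠ 0 := left_ne_zero_of_mul_eq_one (Jinv_mul hz)

lemma Jinv_sq {z : ℂ} (hz : z ∉ Complex.ofReal '' Set.Icc (-1 : ℝ) 1) :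
    (Jinv z)^2 + 1 = 2 * z * Jinv z := by
  rw [Jinv]
  linear_combination s_sq hz

lemma harg {z : ℂ} (hz : z ∉ Complex.ofReal '' Set.Icc (-1 : ℝ) 1) :
    |Complex.arg (z+1) - Complex.arg (z-1)| < π := by
  have hpi := Real.pi_pos
  rcases eq_or_ne z.im 0 with him | him
  · have hre : z.re ∉ Icc (-1:ℝ) 1 := fun h =>
      hz ⟨z.re, h, Complex.ext (by simp) (by simp [him])⟩
    have hre' : z.re < -1 ∨ 1 < z.re := by
      by_contra hcon
      push_neg at hcon
      exact hre ⟨hcon.1, hcon.2⟩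
    have e1 : z + 1 = ((z.re + 1 : ℝ) : ℂ) := Complex.ext (by simp) (by simp [him])
    have e2 : z - 1 = ((z.re - 1 : ℝ) : ℂ) := Complex.ext (by simp) (by simp [him])
    rcases hre' with h | h
    · rw [e1, e2, Complex.arg_ofReal_of_neg (by linarith), Complex.arg_ofReal_of_neg (by linarith)]
      simpa using hpi
    · rw [e1, e2, Complex.arg_ofReal_of_nonneg (by linarith), Complex.arg_ofReal_of_nonneg (by linarith)]
      simpa using hpi
  · have him1 : (z+1).im = z.im := by simp
    have him2 : (z-1).im = z.im := by simp
    rcases him.lt_or_gt with h | h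
    · have ha1 : Complex.arg (z+1) < 0 := Complex.arg_neg_iff.mpr (by rw [him1]; exact h)
      have ha2 : Complex.arg (z-1) < 0 := Complex.arg_neg_iff.mpr (by rw [him2]; exact h)
      have hb1 : -π < Complex.arg (z+1) := Complex.neg_pi_lt_arg _
      have hb2 : -π < Complex.arg (z-1) := Complex.neg_pi_lt_arg _
      rw [abs_lt]; constructor <;> linarith
    · have ha1 : 0 ≤ Complex.arg (z+1) := Complex.arg_nonneg_iff.mpr (by rw [him1]; exact h.le)
      have ha2 : 0 ≤ Complex.arg (z-1) := Complex.arg_nonneg_iff.mpr (by rw [him2]; exact h.le)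
      have hb1 : Complex.arg (z+1) ≤ π := Complex.arg_le_pi _
      have hb2 : Complex.arg (z-1) ≤ π := Complex.arg_le_pi _
      have hne1 : Complex.arg (z+1) ≠ π := fun hp => by
        have := (Complex.arg_eq_pi_iff.mp hp).2
        rw [him1] at this
        exact him this
      have hne2 : Complex.arg (z-1) ≠ π := fun hp => by
        have := (Complex.arg_eq_pi_iff.mp hp).2
        rw [him2] at this
        exact him this
      rw [abs_lt]
      constructor
      · have := lt_of_le_of_ne hb2 hne2
        linarith
      · have := lt_of_le_of_ne hb1 hne1
        linarith

lemma re_conj_mul_pos {z : ℂ} (hz : z ∉ Complex.ofReal '' Set.Icc (-1 : ℝ) 1) :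
    0 < ((starRingEnd ℂ) z * ((z - 1) ^ ((1 : ℂ) / 2) * (z + 1) ^ ((1 : ℂ) / 2))).re := by
  have h1 := h1_ne hz
  have h2 := hm1_ne hz
  set s₁ := (z - 1) ^ ((1 : ℂ) / 2) with hs₁
  set s₂ := (z + 1) ^ ((1 : ℂ) / 2) with hs₂
  have e1 : s₁ = Complex.exp (Complex.log (z-1) * (1/2)) := by
    rw [hs₁, Complex.cpow_def_of_ne_zero h1]
  have e2 : s₂ = Complex.exp (Complex.log (z+1) * (1/2)) := by
    rw [hs₂, Complex.cpow_def_of_ne_zero h2]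
  have hs1ne : s₁ ≠ 0 := by rw [e1]; exact Complex.exp_ne_zero _
  have hs2ne : s₂ ≠ 0 := by rw [e2]; exact Complex.exp_ne_zero _
  have hkey : 0 < ((starRingEnd ℂ) s₁ * s₂).re := by
    rw [e1, e2, ← Complex.exp_conj, ← Complex.exp_add, Complex.exp_re]
    apply mul_pos (Real.exp_pos _)
    apply Real.cos_pos_of_mem_Ioo
    have him : ((starRingEnd ℂ) (Complex.log (z-1) * (1/2)) + Complex.log (z+1) * (1/2)).im
        = (Complex.arg (z+1) - Complex.arg (z-1))/2 := by
      simp [Complex.add_im, Complex.conj_im, Complex.mul_im, Complex.log_im,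
        Complex.log_re]
      norm_num
      ring
    rw [him]
    have hh := harg hz
    rw [abs_lt] at hh
    constructor
    · linarith [hh.1]
    · linarith [hh.2]
  have q1 : s₁^2 = z - 1 := half_pow h1
  have q2 : s₂^2 = z + 1 := half_pow h2
  have n1 : (starRingEnd ℂ) s₁ * s₁ = ↑(Complex.normSq s₁) := by
    rw [mul_comm]; exact Complex.mul_conj _
  have n2 : (starRingEnd ℂ) s₂ * s₂ = ↑(Complex.normSq s₂) := by
    rw [mul_comm]; exact Complex.mul_conj _
  have hzid : z = (s₁^2 + s₂^2)/2 := by rw [q1, q2]; ring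
  have hid2 : 2 * ((starRingEnd ℂ) z * (s₁ * s₂))
      = ↑(Complex.normSq s₁) * ((starRingEnd ℂ) s₁ * s₂)
        + ↑(Complex.normSq s₂) * ((starRingEnd ℂ) s₂ * s₁) := by
    rw [← n1, ← n2]
    nth_rewrite 1 [hzid]
    rw [map_div₀, map_add, map_pow, map_pow]
    simp only [map_ofNat]
    ring
  have hconjre : ((starRingEnd ℂ) s₂ * s₁).re = ((starRingEnd ℂ) s₁ * s₂).re := by
    have : (starRingEnd ℂ) s₂ * s₁ = (starRingEnd ℂ) ((starRingEnd ℂ) s₁ * s₂) := by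
      rw [map_mul, Complex.conj_conj]; ring
    rw [this, Complex.conj_re]
  have hre2 : 2 * ((starRingEnd ℂ) z * (s₁ * s₂)).re
      = (Complex.normSq s₁ + Complex.normSq s₂) * ((starRingEnd ℂ) s₁ * s₂).re := by
    have := congrArg Complex.re hid2
    simpa [Complex.add_re, Complex.mul_re, Complex.ofReal_re, Complex.ofReal_im,
      hconjre, add_mul] using this
    
  have hn1pos : 0 < Complex.normSq s₁ := Complex.normSq_pos.mpr hs1ne
  have hn2pos : 0 < Complex.normSq s₂ := Complex.normSq_pos.mpr hs2ne
  nlinarith [hkey, hn1pos, hn2pos, hre2]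

lemma abs_Jinv_lt_one {z : ℂ} (hz : z ∉ Complex.ofReal '' Set.Icc (-1 : ℝ) 1) :
    ‖Jinv z‖ < 1 := by
  set s := (z - 1) ^ ((1 : ℂ) / 2) * (z + 1) ^ ((1 : ℂ) / 2) with hs
  have hres0 := re_conj_mul_pos hz
  have hres : 0 < z.re*s.re + z.im*s.im := by
    have : ((starRingEnd ℂ) z * s).re = z.re*s.re + z.im*s.im := by
      simp [Complex.mul_re, Complex.conj_re, Complex.conj_im]
    rw [← this]
    exact hres0
  have hlt : ‖z - s‖ < ‖z + s‖ := by
    rw [Complex.norm_def, Complex.norm_def]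
    apply Real.sqrt_lt_sqrt (Complex.normSq_nonneg _)
    simp only [Complex.normSq_apply, Complex.sub_re, Complex.sub_im, Complex.add_re,
      Complex.add_im]
    nlinarith [hres]
  have hmul : ‖Jinv z‖ * ‖z + s‖ = 1 := by
    rw [← norm_mul, Jinv_mul hz, norm_one]
  have hJ : ‖Jinv z‖ = ‖z - s‖ := by rw [Jinv]
  nlinarith [norm_nonneg (Jinv z), hlt, hmul, hJ, norm_nonneg (z+s)]

lemma image_cos : Real.cos '' Ioo 0 π = Ioo (-1:ℝ) 1 := by
  have hpi := Real.pi_pos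
  ext x
  constructor
  · rintro ⟨θ, hθ, rfl⟩
    constructor
    · have : Real.cos π < Real.cos θ :=
        Real.cos_lt_cos_of_nonneg_of_le_pi hθ.1.le le_rfl hθ.2
      rwa [Real.cos_pi] at this
    · have : Real.cos θ < Real.cos 0 :=
        Real.cos_lt_cos_of_nonneg_of_le_pi le_rfl hθ.2.le hθ.1
      rwa [Real.cos_zero] at this
  · intro hx
    refine ⟨Real.arccos x, ⟨Real.arccos_pos.mpr hx.2, ?_⟩, Real.cos_arccos hx.1.le hx.2.le⟩
    refine lt_of_le_of_ne (Real.arccos_le_pi x) (fun h => ?_)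
    have hc := Real.cos_arccos hx.1.le hx.2.le
    rw [h, Real.cos_pi] at hc
    linarith [hx.1]

/-- Log transform of `t/√(1-t²)`:
`ℒ[t/√(1-t²)](z) = -Re(J₊⁻¹(z))` for `z ∈ ℂ∖[-1,1]`. -/
theorem log_transform_t_inv_sqrt (z : ℂ)
    (hz : z ∉ Complex.ofReal '' Set.Icc (-1 : ℝ) 1) :
    ((1 / Real.pi) *
        ∫ t in (-1 : ℝ)..1,
          Real.log ‖(t : ℂ) - z‖ * (t / Real.sqrt (1 - t ^ 2)))
      = -(Jinv z).re := by
  have hpi := Real.pi_pos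
  set w := Jinv z with hwdef
  have hwne : w ≠ 0 := Jinv_ne_zero hz
  have habsw : ‖w‖ < 1 := abs_Jinv_lt_one hz
  set f : ℝ → ℝ := fun t => Real.log (‖(t : ℂ) - z‖) * (t / Real.sqrt (1 - t ^ 2))
    with hf
  -- step 1: interval integral to set integral over Ioo
  have step1 : ∫ t in (-1 : ℝ)..1, f t = ∫ t in Ioo (-1:ℝ) 1, f t := by
    rw [intervalIntegral.integral_of_le (by norm_num : (-1:ℝ) ≤ 1),
      integral_Ioc_eq_integral_Ioo]
  -- step 2: change of variables
  have step2 : ∫ t in Ioo (-1:ℝ) 1, f t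
      = ∫ θ in Ioo (0:ℝ) π, |(-Real.sin θ)| • f (Real.cos θ) := by
    rw [← image_cos]
    exact integral_image_eq_integral_abs_deriv_smul measurableSet_Ioo
      (fun x _ => (Real.hasDerivAt_cos x).hasDerivWithinAt)
      (Real.injOn_cos.mono Ioo_subset_Icc_self) f
  -- step 3: simplify integrand on Ioo 0 π
  have step3 : ∫ θ in Ioo (0:ℝ) π, |(-Real.sin θ)| • f (Real.cos θ)
      = ∫ θ in Ioo (0:ℝ) π, Real.log (‖((Real.cos θ : ℝ) : ℂ) - z‖) * Real.cos θ := by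
    apply setIntegral_congr_fun measurableSet_Ioo
    intro θ hθ
    have hsin : 0 < Real.sin θ := Real.sin_pos_of_pos_of_lt_pi hθ.1 hθ.2
    have hsq : Real.sqrt (1 - Real.cos θ ^ 2) = Real.sin θ := by
      rw [show (1:ℝ) - Real.cos θ ^ 2 = Real.sin θ ^ 2 by
        have := Real.sin_sq_add_cos_sq θ; linarith]
      exact Real.sqrt_sq hsin.le
    rw [hf]
    simp only [smul_eq_mul, abs_neg, abs_of_pos hsin, hsq]
    field_simp
  -- step 4: log factorization
  have hfac : ∀ t : ℝ, (1:ℂ) - 2*w*t + w^2 = 2*w*(z - t) := fun t => by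
    linear_combination Jinv_sq hz
  have hlog : ∀ θ : ℝ, Real.log (‖((Real.cos θ : ℝ):ℂ) - z‖) * Real.cos θ
      = Real.log (‖1 - 2*w*Real.cos θ + w^2‖) * Real.cos θ
        - Real.log (2*‖w‖) * Real.cos θ := by
    intro θ
    have hne : (((Real.cos θ : ℝ):ℂ)) - z ≠ 0 := sub_ne_zero.mpr
      (hz_ne hz _ ⟨Real.neg_one_le_cos θ, Real.cos_le_one θ⟩)
    have habsne : ‖(((Real.cos θ : ℝ)):ℂ) - z‖ ≠ 0 := norm_ne_zero_iff.mpr hne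
    have e : ‖1 - 2*w*(Real.cos θ:ℂ) + w^2‖
        = 2*‖w‖ * ‖(((Real.cos θ:ℝ)):ℂ) - z‖ := by
      rw [hfac (Real.cos θ), norm_mul, norm_mul, Complex.norm_two, norm_sub_rev]
    rw [e, Real.log_mul (mul_ne_zero two_ne_zero (norm_ne_zero_iff.mpr hwne)) habsne]
    ring
  have hPne : ∀ θ:ℝ, (1:ℂ) - 2*w*Real.cos θ + w^2 ≠ 0 := by
    intro θ
    rw [hfac (Real.cos θ)]
    exact mul_ne_zero (mul_ne_zero two_ne_zero hwne)
      (sub_ne_zero.mpr (hz_ne hz _ ⟨Real.neg_one_le_cos θ, Real.cos_le_one θ⟩).symm)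
  have c1 : Continuous (fun θ:ℝ =>
      Real.log (‖1 - 2*w*Real.cos θ + w^2‖) * Real.cos θ) := by
    apply Continuous.mul ?_ Real.continuous_cos
    apply Continuous.log ?_ (fun θ => norm_ne_zero_iff.mpr (hPne θ))
    apply continuous_norm.comp
    fun_prop
  have c2 : Continuous (fun θ:ℝ => Real.log (2*‖w‖) * Real.cos θ) := by
    fun_prop
  have step4 : ∫ θ in Ioo (0:ℝ) π, Real.log (‖((Real.cos θ:ℝ):ℂ) - z‖) * Real.cos θ
      = (∫ θ in Ioo (0:ℝ) π, Real.log (‖1 - 2*w*Real.cos θ + w^2‖) * Real.cos θ)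
        - (∫ θ in Ioo (0:ℝ) π, Real.log (2*‖w‖) * Real.cos θ) := by
    rw [← integral_sub]
    · apply setIntegral_congr_fun measurableSet_Ioo
      intro θ _
      exact hlog θ
    · exact (c1.integrableOn_Icc (a := 0) (b := π)).mono_set Ioo_subset_Icc_self
    · exact (c2.integrableOn_Icc (a := 0) (b := π)).mono_set Ioo_subset_Icc_self
  have hcos0 : ∫ θ in Ioo (0:ℝ) π, Real.cos θ = 0 := by
    rw [← integral_Ioc_eq_integral_Ioo, ← intervalIntegral.integral_of_le hpi.le]
    simp [integral_cos]
  have step5 : ∫ θ in Ioo (0:ℝ) π, Real.log (2*‖w‖) * Real.cos θ = 0 := by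
    rw [integral_const_mul, hcos0, mul_zero]
  rw [step1, step2, step3, step4, integral_core habsw, step5]
  field_simp
  ring
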